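/- No ℵ_n (for n < ω) is a Jónsson cardinal: for each natural number n there exists ψ : [ℵ_n]^{<ω} → ℵ_n such that for every subset W of ℵ_n of cardinality ℵ_n, the image ψ([W]^{<ω}) equals ℵ_n. -/

import Mathlib

open Cardinal

/-- Auxiliary predicate: a "Jónsson failure witness" for the type `α`. -/
def HasJW (α : Type u) : Prop :=
  ∃ ψ : Finset α → α, ∀ W : Set α, #W = #α → ∀ y : α, ∃ s : Finset α, ↑s ⊆ W ∧ ψ s = y

lemma HasJW.of_equiv {α β : Type u} (h : HasJW α) (e : α ≃ β) : HasJW β := by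
  classical
  obtain ⟨ψ, hψ⟩ := h
  refine ⟨fun s => e (ψ (s.image e.symm)), fun W hW y => ?_⟩
  have hW' : #(e.symm '' W) = #α := by
    rw [Cardinal.mk_image_eq e.symm.injective, hW, Cardinal.mk_congr e]
  obtain ⟨s, hs, hψs⟩ := hψ (e.symm '' W) hW' (e.symm y)
  refine ⟨s.image e, ?_, ?_⟩
  · intro b hb
    simp only [Finset.coe_image, Set.mem_image, Finset.mem_coe] at hb
    obtain ⟨a, ha, rfl⟩ := hb
    obtain ⟨w, hw, hwa⟩ := hs ha
    rwa [← hwa, Equiv.apply_symm_apply]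
  · show e (ψ ((s.image e).image e.symm)) = y
    have h4 : (s.image e).image e.symm = s := by
      rw [Finset.image_image]
      refine (Finset.image_congr ?_).trans (Finset.image_id)
      intro a _; simp
    rw [h4, hψs, Equiv.apply_symm_apply]

lemma hasJW_of_mk_aleph0 {α : Type u} (hα : #α = ℵ₀) : HasJW α := by
  have hα' : #α = #(ULift.{u} ℕ) := by simp [hα]
  obtain ⟨e⟩ := Cardinal.eq.1 hα'
  refine ⟨fun s => e.symm ⟨s.card⟩, fun W hW y => ?_⟩
  have hWinf : W.Infinite := by
    rw [← Set.infinite_coe_iff, Cardinal.infinite_iff, hW, hα]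
  obtain ⟨t, ht, htc⟩ := hWinf.exists_subset_card_eq (e y).down
  refine ⟨t, ht, ?_⟩
  show e.symm ⟨t.card⟩ = y
  rw [htc]
  exact e.symm_apply_apply y

lemma hasJW_succ {α : Type u} (hα : ℵ₀ ≤ #α) (h : HasJW α) :
    HasJW (Order.succ (#α)).ord.ToType := by
  classical
  obtain ⟨ψ₀, hψ₀⟩ := h
  set κ := #α with hκ
  set β := (Order.succ κ).ord.ToType with hβ
  have hκβ : #β = Order.succ κ := Cardinal.mk_ord_toType _
  haveI : Nonempty α := Cardinal.mk_ne_zero_iff.1 ((aleph0_pos.trans_le hα).ne')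
  haveI : Nonempty β := by
    rw [← Cardinal.mk_ne_zero_iff, hκβ]
    exact (Cardinal.succ_ne_zero κ)
  -- injections from initial segments into α
  have hIio : ∀ x : β, #(Set.Iio x) ≤ κ :=
    fun x => Order.lt_succ_iff.1 (Cardinal.mk_Iio_ord_toType x)
  have hinj : ∀ x : β, ∃ f : Set.Iio x → α, Function.Injective f := by
    intro x
    obtain ⟨f⟩ := Cardinal.le_def _ _ |>.1 (hIio x)
    exact ⟨f, f.injective⟩
  choose f hf using hinj
  let g : β → β → α := fun x y =>
    if h : y < x then f x ⟨y, h⟩ else Classical.arbitrary α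
  let d : β → α → β := fun x a =>
    if h : ∃ y, y < x ∧ g x y = a then h.choose else Classical.arbitrary β
  have ginj : ∀ x z w, z < x → w < x → g x z = g x w → z = w := by
    intro x z w hz hw hzw
    have h2 : f x ⟨z, hz⟩ = f x ⟨w, hw⟩ := by
      have h3 := hzw
      simp only [g] at h3
      rw [dif_pos hz, dif_pos hw] at h3
      exact h3
    simpa using congrArg Subtype.val (hf x h2)
  have hgd : ∀ x y, y < x → d x (g x y) = y := by
    intro x y hyx
    have hex : ∃ z, z < x ∧ g x z = g x y := ⟨y, hyx, rfl⟩
    have hsp := hex.choose_spec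
    have h1 : d x (g x y) = hex.choose := dif_pos hex
    rw [h1]
    exact ginj x _ _ hsp.1 hyx hsp.2
  let ψ : Finset β → β := fun s =>
    if hs : s.Nonempty then
      d (s.max' hs) (ψ₀ ((s.erase (s.max' hs)).image (g (s.max' hs))))
    else Classical.arbitrary β
  refine ⟨ψ, fun W hW γ => ?_⟩
  rw [hκβ] at hW
  -- the elements of W above γ
  set W' : Set β := {w ∈ W | γ < w} with hW'def
  have hIic : #(Set.Iic γ) ≤ κ := by
    have : Set.Iic γ ⊆ insert γ (Set.Iio γ) := by
      intro z hz
      rcases lt_or_eq_of_le (Set.mem_Iic.1 hz) with h' | h'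
      · exact Set.mem_insert_of_mem _ h'
      · simp [h']
    calc #(Set.Iic γ) ≤ #(insert γ (Set.Iio γ) : Set β) := Cardinal.mk_le_mk_of_subset this
      _ ≤ #(Set.Iio γ) + 1 := Cardinal.mk_insert_le
      _ ≤ κ + 1 := by gcongr; exact hIio γ
      _ ≤ κ + κ := by gcongr; exact one_le_aleph0.trans hα
      _ = κ := Cardinal.add_eq_self hα
  have hW'big : κ < #W' := by
    by_contra hle
    push_neg at hle
    have hsub : W ⊆ W' ∪ Set.Iic γ := by
      intro w hw
      rcases le_or_gt w γ with h' | h'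
      · exact Or.inr h'
      · exact Or.inl ⟨hw, h'⟩
    have : #W ≤ κ := by
      calc #W ≤ #(W' ∪ Set.Iic γ : Set β) := Cardinal.mk_le_mk_of_subset hsub
        _ ≤ #W' + #(Set.Iic γ) := Cardinal.mk_union_le _ _
        _ ≤ κ + κ := by gcongr
        _ = κ := Cardinal.add_eq_self hα
    rw [hW] at this
    exact absurd this (Order.lt_succ κ).not_ge
  -- a subset of size κ
  obtain ⟨V, hVW', hV⟩ := Cardinal.le_mk_iff_exists_subset.1 hW'big.le
  -- a strict upper bound for V ∪ {γ}
  have hreg : (Order.succ κ).ord.cof = Order.succ κ := (Cardinal.isRegular_succ hα).cof_eq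
  haveI : IsWellOrder β (· < ·) := isWellOrder_lt
  have hbdd : Set.Bounded (· < ·) (insert γ V) := by
    by_contra hnb
    have hcof : IsCofinal (insert γ V) := fun a => by
      obtain ⟨b', hbS, hba⟩ := (Set.not_bounded_iff _).1 hnb a
      exact ⟨b', hbS, not_lt.1 hba⟩
    have hle : Order.cof (Order.succ κ).ord.ToType ≤ #(insert γ V : Set β) := Order.cof_le hcof
    rw [Ordinal.cof_toType, hreg] at hle
    refine absurd hle (not_le.2 ?_)
    calc #(insert γ V : Set β) ≤ #V + 1 := Cardinal.mk_insert_le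
      _ ≤ κ + κ := by rw [hV]; gcongr; exact one_le_aleph0.trans hα
      _ = κ := Cardinal.add_eq_self hα
      _ < Order.succ κ := Order.lt_succ κ
  obtain ⟨b, hb⟩ := hbdd
  -- an element of W' above b
  have hx : ∃ x ∈ W', b ≤ x := by
    by_contra hno
    push_neg at hno
    have : W' ⊆ Set.Iio b := fun w hw => hno w hw
    exact absurd ((Cardinal.mk_le_mk_of_subset this).trans (hIio b)) hW'big.not_ge
  obtain ⟨x, hxW', hbx⟩ := hx
  have hγx : γ < x := lt_of_lt_of_le (hb γ (Set.mem_insert _ _)) hbx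
  have hVx : ∀ v ∈ V, v < x := fun v hv =>
    lt_of_lt_of_le (hb v (Set.mem_insert_of_mem _ hv)) hbx
  -- the image of V under g x
  have hginj : Set.InjOn (g x) V := fun v₁ h₁ v₂ h₂ hgv =>
    ginj x v₁ v₂ (hVx v₁ h₁) (hVx v₂ h₂) hgv
  have hU : #(g x '' V) = #α := by
    rw [Cardinal.mk_image_eq_of_injOn _ _ hginj, hV]
  obtain ⟨t, htU, hψt⟩ := hψ₀ (g x '' V) hU (g x γ)
  -- pull back t to a finite subset of V
  have hdt : ∀ a ∈ t, d x a ∈ V ∧ d x a < x ∧ g x (d x a) = a := by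
    intro a ha
    obtain ⟨v, hvV, rfl⟩ := htU ha
    have hvx := hVx v hvV
    rw [hgd x v hvx]
    exact ⟨hvV, hvx, rfl⟩
  set T : Finset β := t.image (d x) with hT
  have hxT : x ∉ T := by
    intro hxmem
    obtain ⟨a, ha, hda⟩ := Finset.mem_image.1 hxmem
    have := (hdt a ha).2.1
    rw [hda] at this
    exact lt_irrefl x this
  refine ⟨insert x T, ?_, ?_⟩
  · intro z hz
    rcases Finset.mem_insert.1 (by simpa using hz) with rfl | hzT
    · exact hxW'.1
    · obtain ⟨a, ha, rfl⟩ := Finset.mem_image.1 hzT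
      exact hVW' ((hdt a ha).1) |>.1
  · have hne : (insert x T).Nonempty := ⟨x, Finset.mem_insert_self _ _⟩
    have hmax : (insert x T).max' hne = x := by
      apply le_antisymm
      · apply Finset.max'_le
        intro z hz
        rcases Finset.mem_insert.1 hz with rfl | hzT
        · exact le_refl _
        · obtain ⟨a, ha, rfl⟩ := Finset.mem_image.1 hzT
          exact ((hdt a ha).2.1).le
      · exact Finset.le_max' _ _ (Finset.mem_insert_self _ _)
    have herase : (insert x T).erase x = T := Finset.erase_insert hxT
    have himg : T.image (g x) = t := by
      rw [hT, Finset.image_image]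
      refine (Finset.image_congr ?_).trans (Finset.image_id)
      intro a ha
      exact (hdt a (by simpa using ha)).2.2
    show ψ (insert x T) = γ
    simp only [ψ, dif_pos hne, hmax, herase, himg, hψt]
    exact hgd x γ hγx

theorem aleph_n_not_jonsson (n : ℕ) :
    ∃ ψ : Finset (aleph n).ord.ToType → (aleph n).ord.ToType,
      ∀ W : Set (aleph n).ord.ToType, #W = aleph n →
        {y | ∃ s : Finset (aleph n).ord.ToType, ↑s ⊆ W ∧ ψ s = y} = Set.univ := by
  have hmk : ∀ m : ℕ, #(aleph m).ord.ToType = aleph m := fun m => Cardinal.mk_ord_toType _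
  have H : ∀ m : ℕ, HasJW (aleph m).ord.ToType := by
    intro m
    induction m with
    | zero => exact hasJW_of_mk_aleph0 (by rw [hmk 0]; simp [Cardinal.aleph_zero])
    | succ k ih =>
      have h1 : ℵ₀ ≤ #(aleph k).ord.ToType := by rw [hmk k]; exact Cardinal.aleph0_le_aleph _
      have h2 := hasJW_succ h1 ih
      have h4 : ((k + 1 : ℕ) : Ordinal) = Order.succ (k : Ordinal) := by
        push_cast
        rw [Ordinal.add_one_eq_succ]
      rw [h4, Cardinal.aleph_succ, ← hmk k]
      exact h2
  obtain ⟨ψ₁, hψ₁⟩ := H n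
  -- bridge the two universes
  have hlift : Cardinal.lift.{u_2} (#(aleph n).ord.ToType : Cardinal.{u_1}) =
      Cardinal.lift.{u_1} (#(aleph n).ord.ToType : Cardinal.{u_2}) := by
    rw [hmk n, Cardinal.mk_ord_toType, Cardinal.lift_aleph, Cardinal.lift_aleph]
    congr 1
    simp
  obtain ⟨e⟩ := Cardinal.lift_mk_eq'.1 hlift
  refine ⟨fun s => e (ψ₁ s), fun W hW => ?_⟩
  rw [Set.eq_univ_iff_forall]
  intro y
  obtain ⟨s, hs, hψs⟩ := hψ₁ W (by rw [hW, hmk n]) (e.symm y)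
  refine ⟨s, hs, ?_⟩
  show e (ψ₁ s) = y
  rw [hψs, Equiv.apply_symm_apply]
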